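/- Let Ψ be a nontrivial radial Blaschke Minkowski homomorphism on star bodies in R^n. For star bodies K, L and 0 ≤ i ≤ n-1, 0 ≤ j ≤ n-3: W̃_i(Ψ_j(K ~+ L))^{1/((n-i)(n-j-1))} ≤ W̃_i(Ψ_j K)^{1/((n-i)(n-j-1))} + W̃_i(Ψ_j L)^{1/((n-i)(n-j-1))}, with equality if and only if K and L are dilates. In particular, V(Ψ(K ~+ L))^{1/(n(n-1))} ≤ V(ΨK)^{1/(n(n-1))} + V(ΨL)^{1/(n(n-1))}. -/

import Mathlib

open MeasureTheory Metric
open scoped RealInnerProductSpace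

noncomputable section

/-- Euclidean space ℝⁿ. -/
abbrev Euc (n : ℕ) := EuclideanSpace ℝ (Fin n)

/-- The unit sphere S^{n-1} ⊂ ℝⁿ. -/
abbrev Sph (n : ℕ) := Metric.sphere (0 : Euc n) 1

/-- Spherical Lebesgue measure on S^{n-1}. -/
def sphMeasure (n : ℕ) [NeZero n] : Measure (Sph n) := volume.toSphere

/-- A star body (with respect to the origin) in ℝⁿ, described by its continuous
positive radial function on the unit sphere. -/
structure StarBody (n : ℕ) where
  radial : C(Sph n, ℝ)
  pos : ∀ u, 0 < radial u

/-- Two star bodies are dilates if their radial functions are proportional. -/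
def Dilates (n : ℕ) (K L : StarBody n) : Prop :=
  ∃ c : ℝ, 0 < c ∧ ∀ u, K.radial u = c * L.radial u

/-- The i-th dual quermassintegral W̃_i(L) = (1/n) ∫ ρ(L,u)^{n-i} du. -/
def dualQuermass (n : ℕ) [NeZero n] (i : ℕ) (L : StarBody n) : ℝ :=
  (1 / n : ℝ) * ∫ u, L.radial u ^ (n - i) ∂(sphMeasure n)

/-- The unit ball as a star body (radial function ≡ 1). -/
def unitStar (n : ℕ) : StarBody n := ⟨ContinuousMap.const _ 1, fun _ => one_pos⟩

/-- The radial Minkowski sum K ~+ L, with ρ(K ~+ L,·) = ρ(K,·) + ρ(L,·). -/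
def radAdd (n : ℕ) (K L : StarBody n) : StarBody n :=
  ⟨K.radial + L.radial, fun u => by simpa using add_pos (K.pos u) (L.pos u)⟩

section DBMHelpers
open Set
open scoped ENNReal
set_option linter.unusedSectionVars false
set_option maxHeartbeats 1000000

variable {n : ℕ} [NeZero n]

lemma contIntegrable (ν : Measure (Sph n)) [IsFiniteMeasure ν] {h : Sph n → ℝ}
    (hc : Continuous h) : Integrable h ν :=
  hc.integrable_of_hasCompactSupport (HasCompactSupport.of_compactSpace _)

lemma sphNonempty (ν : Measure (Sph n)) (hν : ν ≠ 0) : Nonempty (Sph n) := by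
  by_contra h
  have : IsEmpty (Sph n) := not_nonempty_iff.mp h
  exact hν (Measure.eq_zero_of_isEmpty ν)

lemma integral_rpow_pos (ν : Measure (Sph n)) [IsFiniteMeasure ν] (hν : ν ≠ 0)
    {f : Sph n → ℝ} (hf : Continuous f) (hfp : ∀ x, 0 < f x) (p : ℝ) :
    0 < ∫ x, f x ^ p ∂ν := by
  have hne : Nonempty (Sph n) := sphNonempty ν hν
  have hrc : Continuous fun x => f x ^ p := hf.rpow_const fun x => Or.inl (hfp x).ne'
  obtain ⟨x0, -, hx0⟩ := isCompact_univ.exists_isMinOn univ_nonempty hrc.continuousOn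
  have hmin : ∀ x, f x0 ^ p ≤ f x ^ p := fun x => hx0 (mem_univ x)
  have hpos : 0 < f x0 ^ p := Real.rpow_pos_of_pos (hfp x0) p
  have hle : ∫ x, (f x0 ^ p : ℝ) ∂ν ≤ ∫ x, f x ^ p ∂ν :=
    integral_mono (integrable_const _) (contIntegrable ν hrc) hmin
  rw [integral_const] at hle
  refine lt_of_lt_of_le ?_ hle
  have : 0 < (ν univ).toReal := by
    refine ENNReal.toReal_pos ?_ (measure_ne_top _ _)
    simpa [Measure.measure_univ_eq_zero] using hν
  positivity

lemma eq_zero_on_supp (ν : Measure (Sph n)) [IsFiniteMeasure ν] {h : Sph n → ℝ}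
    (hc : Continuous h) (hnn : ∀ x, 0 ≤ h x) (hint : ∫ x, h x ∂ν = 0)
    {x : Sph n} (hx : ∀ U, IsOpen U → x ∈ U → ν U ≠ 0) : h x = 0 := by
  by_contra hne
  have hxpos : 0 < h x := lt_of_le_of_ne (hnn x) (Ne.symm hne)
  have hae : h =ᵐ[ν] 0 := by
    rw [← integral_eq_zero_iff_of_nonneg hnn (contIntegrable ν hc)]
    exact hint
  have h0 : ν {y | ¬ h y = 0} = 0 := hae
  have hU : IsOpen {y | 0 < h y} := isOpen_lt continuous_const hc
  have : ν {y | 0 < h y} = 0 :=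
    measure_mono_null (fun y hy => ne_of_gt hy) h0
  exact hx _ hU hxpos this

/-- Minkowski's integral inequality with equality condition, for continuous positive
functions on the sphere. -/
lemma minkowski_ineq (ν : Measure (Sph n)) [IsFiniteMeasure ν] (hν : ν ≠ 0)
    {f g : Sph n → ℝ} (hf : Continuous f) (hg : Continuous g)
    (hfp : ∀ x, 0 < f x) (hgp : ∀ x, 0 < g x) {p : ℝ} (hp : 1 < p) :
    (∫ x, (f x + g x) ^ p ∂ν) ^ (1/p) ≤
      (∫ x, f x ^ p ∂ν) ^ (1/p) + (∫ x, g x ^ p ∂ν) ^ (1/p) ∧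
    ((∫ x, (f x + g x) ^ p ∂ν) ^ (1/p) =
        (∫ x, f x ^ p ∂ν) ^ (1/p) + (∫ x, g x ^ p ∂ν) ^ (1/p) →
      ∀ x, (∀ U, IsOpen U → x ∈ U → ν U ≠ 0) →
        f x * (∫ y, g y ^ p ∂ν) ^ (1/p) = g x * (∫ y, f y ^ p ∂ν) ^ (1/p)) := by
  have hp0 : (0:ℝ) < p := lt_trans one_pos hp
  have hIf : 0 < ∫ x, f x ^ p ∂ν := integral_rpow_pos ν hν hf hfp p
  have hIg : 0 < ∫ x, g x ^ p ∂ν := integral_rpow_pos ν hν hg hgp p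
  set F : ℝ := (∫ x, f x ^ p ∂ν) ^ (1/p) with hF
  set G : ℝ := (∫ x, g x ^ p ∂ν) ^ (1/p) with hG
  have hFpos : 0 < F := Real.rpow_pos_of_pos hIf _
  have hGpos : 0 < G := Real.rpow_pos_of_pos hIg _
  have hFG : 0 < F + G := by linarith
  have hFp : F ^ p = ∫ x, f x ^ p ∂ν := by
    rw [hF, one_div, Real.rpow_inv_rpow hIf.le hp0.ne']
  have hGp : G ^ p = ∫ x, g x ^ p ∂ν := by
    rw [hG, one_div, Real.rpow_inv_rpow hIg.le hp0.ne']
  -- the pointwise convexity defect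
  set φ : Sph n → ℝ := fun x =>
    (F/(F+G)) * (f x / F) ^ p + (G/(F+G)) * (g x / G) ^ p - ((f x + g x)/(F+G)) ^ p
    with hφ
  have habsum : F/(F+G) + G/(F+G) = 1 := by field_simp
  have hcomb : ∀ x : Sph n,
      (F/(F+G)) • (f x / F) + (G/(F+G)) • (g x / G) = (f x + g x)/(F+G) := by
    intro x
    simp only [smul_eq_mul]
    field_simp
  have hφnn : ∀ x, 0 ≤ φ x := by
    intro x
    have := (strictConvexOn_rpow hp).convexOn.2
      (Set.mem_Ici.2 (div_nonneg (hfp x).le hFpos.le))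
      (Set.mem_Ici.2 (div_nonneg (hgp x).le hGpos.le))
      (div_nonneg hFpos.le hFG.le) (div_nonneg hGpos.le hFG.le) habsum
    rw [hcomb x] at this
    simp only [hφ, smul_eq_mul] at this ⊢
    linarith
  have hφstrict : ∀ x, f x / F ≠ g x / G → 0 < φ x := by
    intro x hne
    have := (strictConvexOn_rpow hp).2
      (Set.mem_Ici.2 (div_nonneg (hfp x).le hFpos.le))
      (Set.mem_Ici.2 (div_nonneg (hgp x).le hGpos.le)) hne
      (div_pos hFpos hFG) (div_pos hGpos hFG) habsum
    rw [hcomb x] at this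
    simp only [hφ, smul_eq_mul] at this ⊢
    linarith
  -- continuity and integrability
  have hcf : Continuous fun x => (f x / F) ^ p :=
    (hf.div_const F).rpow_const fun x => Or.inl (div_pos (hfp x) hFpos).ne'
  have hcg : Continuous fun x => (g x / G) ^ p :=
    (hg.div_const G).rpow_const fun x => Or.inl (div_pos (hgp x) hGpos).ne'
  have hcfg : Continuous fun x => ((f x + g x)/(F+G)) ^ p :=
    ((hf.add hg).div_const (F+G)).rpow_const
      fun x => Or.inl (div_pos (add_pos (hfp x) (hgp x)) hFG).ne'
  have hcφ : Continuous φ :=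
    ((continuous_const.mul hcf).add (continuous_const.mul hcg)).sub hcfg
  -- value of ∫ φ
  have hIfdiv : ∫ x, (f x / F) ^ p ∂ν = 1 := by
    have : ∀ x : Sph n, (f x / F) ^ p = f x ^ p / F ^ p := fun x =>
      Real.div_rpow (hfp x).le hFpos.le p
    rw [integral_congr_ae (Filter.Eventually.of_forall this), integral_div, hFp,
      div_self hIf.ne']
  have hIgdiv : ∫ x, (g x / G) ^ p ∂ν = 1 := by
    have : ∀ x : Sph n, (g x / G) ^ p = g x ^ p / G ^ p := fun x =>
      Real.div_rpow (hgp x).le hGpos.le p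
    rw [integral_congr_ae (Filter.Eventually.of_forall this), integral_div, hGp,
      div_self hIg.ne']
  have hIfgdiv : ∫ x, ((f x + g x)/(F+G)) ^ p ∂ν
      = (∫ x, (f x + g x) ^ p ∂ν) / (F+G) ^ p := by
    have : ∀ x : Sph n, ((f x + g x)/(F+G)) ^ p = (f x + g x) ^ p / (F+G) ^ p := fun x =>
      Real.div_rpow (add_pos (hfp x) (hgp x)).le hFG.le p
    rw [integral_congr_ae (Filter.Eventually.of_forall this), integral_div]
  have hintφ : ∫ x, φ x ∂ν = 1 - (∫ x, (f x + g x) ^ p ∂ν) / (F+G) ^ p := by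
    have h1 : Integrable (fun x => F/(F+G) * (f x / F) ^ p) ν := (contIntegrable ν hcf).const_mul _
    have h2 : Integrable (fun x => G/(F+G) * (g x / G) ^ p) ν := (contIntegrable ν hcg).const_mul _
    have h3 : Integrable (fun x => ((f x + g x)/(F+G)) ^ p) ν := contIntegrable ν hcfg
    have h12 : Integrable (fun x => F/(F+G) * (f x / F) ^ p + G/(F+G) * (g x / G) ^ p) ν :=
      h1.add h2
    simp only [hφ]
    rw [integral_sub h12 h3, integral_add h1 h2,
      integral_const_mul, integral_const_mul, hIfdiv, hIgdiv, hIfgdiv]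
    rw [mul_one, mul_one, habsum]
  have hφint_nonneg : 0 ≤ ∫ x, φ x ∂ν := integral_nonneg hφnn
  have hFGp : 0 < (F+G) ^ p := Real.rpow_pos_of_pos hFG _
  have hmain : ∫ x, (f x + g x) ^ p ∂ν ≤ (F+G) ^ p := by
    rw [hintφ, sub_nonneg] at hφint_nonneg
    calc ∫ x, (f x + g x) ^ p ∂ν = ((∫ x, (f x + g x) ^ p ∂ν) / (F+G)^p) * (F+G)^p := by
          field_simp
      _ ≤ 1 * (F+G)^p := by
          exact mul_le_mul_of_nonneg_right hφint_nonneg hFGp.le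
      _ = (F+G)^p := one_mul _
  have hineq : (∫ x, (f x + g x) ^ p ∂ν) ^ (1/p) ≤ F + G := by
    calc (∫ x, (f x + g x) ^ p ∂ν) ^ (1/p) ≤ ((F+G) ^ p) ^ (1/p) :=
          Real.rpow_le_rpow (integral_nonneg fun x =>
            Real.rpow_nonneg (add_pos (hfp x) (hgp x)).le p) hmain (by positivity)
      _ = F + G := by rw [one_div, Real.rpow_rpow_inv hFG.le hp0.ne']
  refine ⟨hineq, ?_⟩
  intro heq x hx
  -- from equality, ∫ φ = 0
  have hIfg : ∫ x, (f x + g x) ^ p ∂ν = (F+G) ^ p := by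
    have := congrArg (fun t : ℝ => t ^ p) heq
    simpa only [one_div, Real.rpow_inv_rpow (integral_nonneg fun x =>
      Real.rpow_nonneg (add_pos (hfp x) (hgp x)).le p) hp0.ne'] using this
  have hintφ0 : ∫ x, φ x ∂ν = 0 := by
    rw [hintφ, hIfg, div_self hFGp.ne', sub_self]
  have hφx : φ x = 0 := eq_zero_on_supp ν hcφ hφnn hintφ0 hx
  have hratio : f x / F = g x / G := by
    by_contra hne
    exact (hφstrict x hne).ne' hφx
  have : f x * G = g x * F := by
    field_simp at hratio
    linarith [hratio]
  exact this

lemma prod_ite_pow (N t : ℕ) (ht : t ≤ N) (x : ℝ) :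
    (∏ k : Fin N, (if (k : ℕ) < t then x else 1)) = x ^ t := by
  rw [Fin.prod_univ_eq_prod_range (fun k => if k < t then x else 1) N,
    Finset.prod_ite, Finset.prod_const, Finset.prod_const, one_pow, mul_one]
  congr 1
  have : Finset.filter (fun k => k < t) (Finset.range N) = Finset.range t := by
    ext k
    simp only [Finset.mem_filter, Finset.mem_range]
    omega
  rw [this, Finset.card_range]

lemma sphMeasure_ne_zero (n : ℕ) [NeZero n] : sphMeasure n ≠ 0 := by
  unfold sphMeasure
  intro h
  have h1 : volume.toSphere (Set.univ : Set (Sph n)) = 0 := by rw [h]; rfl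
  rw [Measure.toSphere_apply_univ] at h1
  have h2 : (volume (ball (0 : Euc n) 1)) ≠ 0 := (measure_ball_pos _ _ one_pos).ne'
  have hd : ((Module.finrank ℝ (Euc n) : ℕ) : ℝ≥0∞) ≠ 0 := by
    simp only [ne_eq, Nat.cast_eq_zero, finrank_euclideanSpace, Fintype.card_fin]
    exact NeZero.ne n
  exact (mul_ne_zero hd h2) h1

lemma exists_pos_point (ν : Measure (Sph n)) [IsFiniteMeasure ν] (hν : ν ≠ 0) :
    ∃ x : Sph n, ∀ U, IsOpen U → x ∈ U → ν U ≠ 0 := by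
  by_contra h
  push_neg at h
  choose U hUo hxU hU0 using h
  obtain ⟨s, hs⟩ := isCompact_univ.elim_finite_subcover U hUo
    (fun x _ => Set.mem_iUnion.2 ⟨x, hxU x⟩)
  have h0 : ν (Set.univ : Set (Sph n)) = 0 := by
    refine le_antisymm ?_ bot_le
    refine le_trans (measure_mono hs) (le_trans (measure_biUnion_finset_le s U) ?_)
    simp [hU0]
  exact hν (Measure.measure_univ_eq_zero.mp h0)

lemma full_support_of_invariant (S : Measure (Sph n)) [IsFiniteMeasure S] (hS : S ≠ 0)
    (htrans : ∀ w v : Sph n, ∃ φ : Sph n → Sph n, Continuous φ ∧ φ w = v ∧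
      ∀ A : Set (Sph n), MeasurableSet A → S (φ ⁻¹' A) = S A)
    {v : Sph n} {U : Set (Sph n)} (hU : IsOpen U) (hv : v ∈ U) : S U ≠ 0 := by
  intro hU0
  choose φ hφc hφv hφm using fun w => htrans w v
  obtain ⟨s, hs⟩ := isCompact_univ.elim_finite_subcover (fun w => (φ w) ⁻¹' U)
    (fun w => hU.preimage (hφc w))
    (fun w _ => Set.mem_iUnion.2 ⟨w, by simp [Set.mem_preimage, hφv w, hv]⟩)
  have h0 : S (Set.univ : Set (Sph n)) = 0 := by
    refine le_antisymm ?_ bot_le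
    refine le_trans (measure_mono hs)
      (le_trans (measure_biUnion_finset_le s _) ?_)
    have : ∀ w, S ((φ w) ⁻¹' U) = 0 := fun w => by rw [hφm w U hU.measurableSet, hU0]
    simp [this]
  exact hS (Measure.measure_univ_eq_zero.mp h0)

instance sphFinite (n : ℕ) [NeZero n] : IsFiniteMeasure (sphMeasure n) := by
  unfold sphMeasure; infer_instance

lemma core (n i j : ℕ) (hn : 3 ≤ n) [NeZero n]
    (hi : i ≤ n - 1) (hj : j ≤ n - 3)
    {G : Type*} [Group G] [TopologicalSpace G]
    (act : G → Sph n → Sph n)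
    (hact_one : ∀ u, act 1 u = u)
    (hact_mul : ∀ η τ u, act (η * τ) u = act η (act τ u))
    (hact_cont : Continuous fun p : G × Sph n => act p.1 p.2)
    (e : Sph n)
    (htrans : ∀ u : Sph n, ∃ η : G, act η e = u)
    (hinv : ∀ ϑ : G, (sphMeasure n).map (act ϑ) = sphMeasure n)
    (μ : Measure (Sph n)) [IsFiniteMeasure μ] (hμne : μ ≠ 0)
    (Ψm : (Fin (n - 1) → StarBody n) → StarBody n)
    (hrep : ∀ (F : Fin (n - 1) → StarBody n) (η : G),
      (Ψm F).radial (act η e) = ∫ u, ∏ k, (F k).radial (act η u) ∂μ)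
    (K L : StarBody n) :
    dualQuermass n i (Ψm fun k => if (k : ℕ) < n - 1 - j then radAdd n K L else unitStar n)
        ^ (1 / (((n - i) * (n - j - 1) : ℕ) : ℝ)) ≤
      dualQuermass n i (Ψm fun k => if (k : ℕ) < n - 1 - j then K else unitStar n)
        ^ (1 / (((n - i) * (n - j - 1) : ℕ) : ℝ)) +
      dualQuermass n i (Ψm fun k => if (k : ℕ) < n - 1 - j then L else unitStar n)
        ^ (1 / (((n - i) * (n - j - 1) : ℕ) : ℝ)) ∧
    (dualQuermass n i (Ψm fun k => if (k : ℕ) < n - 1 - j then radAdd n K L else unitStar n)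
        ^ (1 / (((n - i) * (n - j - 1) : ℕ) : ℝ)) =
      dualQuermass n i (Ψm fun k => if (k : ℕ) < n - 1 - j then K else unitStar n)
        ^ (1 / (((n - i) * (n - j - 1) : ℕ) : ℝ)) +
      dualQuermass n i (Ψm fun k => if (k : ℕ) < n - 1 - j then L else unitStar n)
        ^ (1 / (((n - i) * (n - j - 1) : ℕ) : ℝ)) ↔ Dilates n K L) := by
  classical
  set S : Measure (Sph n) := sphMeasure n with hSdef
  have hSne : S ≠ 0 := sphMeasure_ne_zero n
  -- exponents
  set mr : ℝ := ((n - 1 - j : ℕ) : ℝ) with hmrdef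
  set pr : ℝ := ((n - i : ℕ) : ℝ) with hprdef
  have hm2 : 2 ≤ n - 1 - j := by omega
  have hp1 : 1 ≤ n - i := by omega
  have hmr1 : (1:ℝ) < mr := by rw [hmrdef]; exact_mod_cast (by omega : 1 < n - 1 - j)
  have hpr1 : (1:ℝ) ≤ pr := by rw [hprdef]; exact_mod_cast hp1
  have hmr0 : (0:ℝ) < mr := lt_trans one_pos hmr1
  have hpr0 : (0:ℝ) < pr := lt_of_lt_of_le one_pos hpr1
  set Pr : ℝ := mr * pr with hPrdef
  have hPr1 : (1:ℝ) < Pr := by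
    calc (1:ℝ) < mr := hmr1
    _ = mr * 1 := (mul_one mr).symm
    _ ≤ mr * pr := by exact mul_le_mul_of_nonneg_left hpr1 hmr0.le
  have hPr0 : (0:ℝ) < Pr := lt_trans one_pos hPr1
  have hacast : (((n - i) * (n - j - 1) : ℕ) : ℝ) = Pr := by
    rw [show n - j - 1 = n - 1 - j from by omega, Nat.cast_mul, hPrdef, hmrdef, hprdef, mul_comm]
  -- group action facts
  have hcontη : ∀ η : G, Continuous (act η) := fun η =>
    hact_cont.comp (Continuous.prodMk_right η)
  have hinvpt : ∀ (η : G) (u : Sph n), act η⁻¹ (act η u) = u := fun η u => by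
    rw [← hact_mul, inv_mul_cancel, hact_one]
  have htrans2 : ∀ w v : Sph n, ∃ η : G, act η w = v := by
    intro w v
    obtain ⟨η₁, h1⟩ := htrans w
    obtain ⟨η₂, h2⟩ := htrans v
    refine ⟨η₂ * η₁⁻¹, ?_⟩
    rw [hact_mul, ← h1, hinvpt, h2]
  have hSfull : ∀ (v : Sph n), ∀ U, IsOpen U → v ∈ U → S U ≠ 0 := by
    intro v U hU hv
    refine full_support_of_invariant S hSne ?_ hU hv
    intro w v'
    obtain ⟨η, hη⟩ := htrans2 w v'
    refine ⟨act η, hcontη η, hη, fun A hA => ?_⟩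
    rw [← Measure.map_apply (hcontη η).measurable hA, hinv η]
  -- the three star bodies
  set PS : StarBody n :=
    Ψm fun k => if (k : ℕ) < n - 1 - j then radAdd n K L else unitStar n with hPSdef
  set PK : StarBody n :=
    Ψm fun k => if (k : ℕ) < n - 1 - j then K else unitStar n with hPKdef
  set PL : StarBody n :=
    Ψm fun k => if (k : ℕ) < n - 1 - j then L else unitStar n with hPLdef
  -- radial values
  have hval : ∀ (M : StarBody n) (η : G),
      (Ψm fun k => if (k : ℕ) < n - 1 - j then M else unitStar n).radial (act η e)
        = ∫ u, M.radial (act η u) ^ (n - 1 - j : ℕ) ∂μ := by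
    intro M η
    rw [hrep]
    refine integral_congr_ae (Filter.Eventually.of_forall fun u => ?_)
    beta_reduce
    have h1 : ∀ k : Fin (n-1), ((if (k : ℕ) < n - 1 - j then M else unitStar n).radial (act η u))
        = (if (k : ℕ) < n - 1 - j then M.radial (act η u) else 1) := by
      intro k; split <;> simp [unitStar]
    exact (Finset.prod_congr rfl fun k _ => h1 k).trans (prod_ite_pow _ _ (by omega) _)
  have hvalK : ∀ η : G, PK.radial (act η e) = ∫ u, K.radial (act η u) ^ (n - 1 - j : ℕ) ∂μ := by
    intro η; rw [hPKdef]; exact hval K η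
  have hvalL : ∀ η : G, PL.radial (act η e) = ∫ u, L.radial (act η u) ^ (n - 1 - j : ℕ) ∂μ := by
    intro η; rw [hPLdef]; exact hval L η
  have hvalS : ∀ η : G,
      PS.radial (act η e) = ∫ u, (K.radial (act η u) + L.radial (act η u)) ^ (n - 1 - j : ℕ) ∂μ := by
    intro η; rw [hPSdef, hval (radAdd n K L) η]
    refine integral_congr_ae (Filter.Eventually.of_forall fun u => ?_)
    simp [radAdd]
  -- inner Minkowski inequality, in massaged form
  have hinner : ∀ η : G,
      (PS.radial (act η e)) ^ (1/mr) ≤ (PK.radial (act η e)) ^ (1/mr)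
          + (PL.radial (act η e)) ^ (1/mr) ∧
      ((PS.radial (act η e)) ^ (1/mr) = (PK.radial (act η e)) ^ (1/mr)
          + (PL.radial (act η e)) ^ (1/mr) →
        ∀ u, (∀ U, IsOpen U → u ∈ U → μ U ≠ 0) →
          K.radial (act η u) * (PL.radial (act η e)) ^ (1/mr)
            = L.radial (act η u) * (PK.radial (act η e)) ^ (1/mr)) := by
    intro η
    have H := minkowski_ineq μ hμne
      (f := fun u => K.radial (act η u)) (g := fun u => L.radial (act η u))
      (K.radial.continuous.comp (hcontη η)) (L.radial.continuous.comp (hcontη η))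
      (fun u => K.pos _) (fun u => L.pos _) (p := mr) hmr1
    have eK : ∫ u, (K.radial (act η u)) ^ mr ∂μ = PK.radial (act η e) := by
      rw [hvalK η]
      refine integral_congr_ae (Filter.Eventually.of_forall fun u => ?_)
      beta_reduce
      rw [hmrdef, Real.rpow_natCast]
    have eL : ∫ u, (L.radial (act η u)) ^ mr ∂μ = PL.radial (act η e) := by
      rw [hvalL η]
      refine integral_congr_ae (Filter.Eventually.of_forall fun u => ?_)
      beta_reduce
      rw [hmrdef, Real.rpow_natCast]
    have eS : ∫ u, (K.radial (act η u) + L.radial (act η u)) ^ mr ∂μ = PS.radial (act η e) := by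
      rw [hvalS η]
      refine integral_congr_ae (Filter.Eventually.of_forall fun u => ?_)
      beta_reduce
      rw [hmrdef, Real.rpow_natCast]
    rw [eK, eL, eS] at H
    exact H
  have hptle : ∀ v : Sph n,
      (PS.radial v) ^ (1/mr) ≤ (PK.radial v) ^ (1/mr) + (PL.radial v) ^ (1/mr) := by
    intro v
    obtain ⟨η, rfl⟩ := htrans v
    exact (hinner η).1
  -- outer Minkowski
  have hFc : Continuous fun v : Sph n => (PK.radial v) ^ (1/mr) :=
    PK.radial.continuous.rpow_const fun v => Or.inl (PK.pos v).ne'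
  have hGc : Continuous fun v : Sph n => (PL.radial v) ^ (1/mr) :=
    PL.radial.continuous.rpow_const fun v => Or.inl (PL.pos v).ne'
  have hFcpos : ∀ v, 0 < (PK.radial v) ^ (1/mr) := fun v => Real.rpow_pos_of_pos (PK.pos v) _
  have hGcpos : ∀ v, 0 < (PL.radial v) ^ (1/mr) := fun v => Real.rpow_pos_of_pos (PL.pos v) _
  have H2 := minkowski_ineq S hSne
    (f := fun v => (PK.radial v) ^ (1/mr)) (g := fun v => (PL.radial v) ^ (1/mr))
    hFc hGc hFcpos hGcpos (p := Pr) hPr1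
  -- identify the integrals
  have hpow_collapse : ∀ (x : ℝ), 0 < x → (x ^ (1/mr)) ^ Pr = x ^ pr := by
    intro x hx
    rw [← Real.rpow_mul hx.le, hPrdef]
    congr 1
    field_simp
  have eJK : ∫ v, ((PK.radial v) ^ (1/mr)) ^ Pr ∂S = ∫ v, (PK.radial v) ^ pr ∂S :=
    integral_congr_ae (Filter.Eventually.of_forall fun v => hpow_collapse _ (PK.pos v))
  have eJL : ∫ v, ((PL.radial v) ^ (1/mr)) ^ Pr ∂S = ∫ v, (PL.radial v) ^ pr ∂S :=
    integral_congr_ae (Filter.Eventually.of_forall fun v => hpow_collapse _ (PL.pos v))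
  rw [eJK, eJL] at H2
  set JS : ℝ := ∫ v, (PS.radial v) ^ pr ∂S with hJSdef
  set JK : ℝ := ∫ v, (PK.radial v) ^ pr ∂S with hJKdef
  set JL : ℝ := ∫ v, (PL.radial v) ^ pr ∂S with hJLdef
  set T : ℝ := ∫ v, ((PK.radial v) ^ (1/mr) + (PL.radial v) ^ (1/mr)) ^ Pr ∂S with hTdef
  have hJSpos : 0 < JS := integral_rpow_pos S hSne PS.radial.continuous PS.pos pr
  have hJKpos : 0 < JK := integral_rpow_pos S hSne PK.radial.continuous PK.pos pr
  have hJLpos : 0 < JL := integral_rpow_pos S hSne PL.radial.continuous PL.pos pr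
  -- pointwise comparison of JS and T integrands
  have hptPr : ∀ v : Sph n, (PS.radial v) ^ pr
      ≤ ((PK.radial v) ^ (1/mr) + (PL.radial v) ^ (1/mr)) ^ Pr := by
    intro v
    have h1 : (PS.radial v) ^ pr = ((PS.radial v) ^ (1/mr)) ^ Pr :=
      (hpow_collapse _ (PS.pos v)).symm
    rw [h1]
    exact Real.rpow_le_rpow (Real.rpow_nonneg (PS.pos v).le _) (hptle v) hPr0.le
  have hcontJS : Continuous fun v : Sph n => (PS.radial v) ^ pr :=
    PS.radial.continuous.rpow_const fun v => Or.inl (PS.pos v).ne'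
  have hcontT : Continuous fun v : Sph n =>
      ((PK.radial v) ^ (1/mr) + (PL.radial v) ^ (1/mr)) ^ Pr :=
    (hFc.add hGc).rpow_const fun v => Or.inl (add_pos (hFcpos v) (hGcpos v)).ne'
  have hJST : JS ≤ T := by
    rw [hJSdef, hTdef]
    exact integral_mono (contIntegrable S hcontJS) (contIntegrable S hcontT) hptPr
  have hTnn : 0 ≤ T := le_trans hJSpos.le hJST
  -- the main chain
  have hchain : JS ^ (1/Pr) ≤ JK ^ (1/Pr) + JL ^ (1/Pr) :=
    le_trans (Real.rpow_le_rpow hJSpos.le hJST (by positivity)) H2.1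
  -- translate dualQuermass into JS/JK/JL
  have hdq : ∀ M : StarBody n, dualQuermass n i M = (1/(n:ℝ)) * ∫ v, (M.radial v) ^ pr ∂S := by
    intro M
    unfold dualQuermass
    congr 1
    refine integral_congr_ae (Filter.Eventually.of_forall fun v => ?_)
    beta_reduce
    rw [hprdef, Real.rpow_natCast]
  have hnpos : (0:ℝ) < 1/(n:ℝ) := by
    have : (0:ℝ) < (n:ℝ) := by exact_mod_cast Nat.pos_of_ne_zero (NeZero.ne n)
    positivity
  have hdqS : dualQuermass n i PS = (1/(n:ℝ)) * JS := hdq PS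
  have hdqK : dualQuermass n i PK = (1/(n:ℝ)) * JK := hdq PK
  have hdqL : dualQuermass n i PL = (1/(n:ℝ)) * JL := hdq PL
  have hsplit : ∀ X : ℝ, 0 ≤ X → ((1/(n:ℝ)) * X) ^ (1/Pr) = (1/(n:ℝ)) ^ (1/Pr) * X ^ (1/Pr) :=
    fun X hX => Real.mul_rpow hnpos.le hX
  have hcpos : 0 < ((1:ℝ)/(n:ℝ)) ^ (1/Pr) := Real.rpow_pos_of_pos hnpos _
  -- final inequality
  have hmainle : dualQuermass n i PS ^ (1/Pr)
      ≤ dualQuermass n i PK ^ (1/Pr) + dualQuermass n i PL ^ (1/Pr) := by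
    rw [hdqS, hdqK, hdqL, hsplit _ hJSpos.le, hsplit _ hJKpos.le, hsplit _ hJLpos.le,
      ← mul_add]
    exact mul_le_mul_of_nonneg_left hchain hcpos.le
  rw [hacast]
  refine ⟨hmainle, ?_, ?_⟩
  · -- equality → dilates
    intro heq
    rw [hdqS, hdqK, hdqL, hsplit _ hJSpos.le, hsplit _ hJKpos.le, hsplit _ hJLpos.le,
      ← mul_add] at heq
    have heq' : JS ^ (1/Pr) = JK ^ (1/Pr) + JL ^ (1/Pr) := mul_left_cancel₀ hcpos.ne' heq
    have hchain1 : JS ^ (1/Pr) ≤ T ^ (1/Pr) :=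
      Real.rpow_le_rpow hJSpos.le hJST (by positivity)
    have eT : T ^ (1/Pr) = JK ^ (1/Pr) + JL ^ (1/Pr) :=
      le_antisymm H2.1 (heq' ▸ hchain1)
    have eJST : JS ^ (1/Pr) = T ^ (1/Pr) := by rw [heq', eT]
    have hJS_T : JS = T := by
      have := congrArg (fun t : ℝ => t ^ Pr) eJST
      simpa only [one_div, Real.rpow_inv_rpow hJSpos.le hPr0.ne',
        Real.rpow_inv_rpow hTnn hPr0.ne'] using this
    -- pointwise equality of the integrands
    have hψ : ∀ v : Sph n, (PS.radial v) ^ pr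
        = ((PK.radial v) ^ (1/mr) + (PL.radial v) ^ (1/mr)) ^ Pr := by
      intro v
      have hz : ∀ w, 0 ≤ ((PK.radial w) ^ (1/mr) + (PL.radial w) ^ (1/mr)) ^ Pr
          - (PS.radial w) ^ pr := fun w => sub_nonneg.2 (hptPr w)
      have hint0 : ∫ w, (((PK.radial w) ^ (1/mr) + (PL.radial w) ^ (1/mr)) ^ Pr
          - (PS.radial w) ^ pr) ∂S = 0 := by
        rw [integral_sub (contIntegrable S hcontT) (contIntegrable S hcontJS)]
        rw [← hTdef, ← hJSdef, hJS_T, sub_self]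
      have := eq_zero_on_supp S (hcontT.sub hcontJS) hz hint0 (hSfull v)
      simp only [Pi.sub_apply] at this
      linarith [this]
    have hHceq : ∀ v : Sph n, (PS.radial v) ^ (1/mr)
        = (PK.radial v) ^ (1/mr) + (PL.radial v) ^ (1/mr) := by
      intro v
      set X : ℝ := (PK.radial v) ^ (1/mr) + (PL.radial v) ^ (1/mr) with hX
      have hXpos : 0 < X := add_pos (hFcpos v) (hGcpos v)
      have h1 : PS.radial v = X ^ mr := by
        have h2 : ((PS.radial v) ^ pr) ^ (pr⁻¹) = (X ^ Pr) ^ (pr⁻¹) := by rw [hψ v]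
        rw [Real.rpow_rpow_inv (PS.pos v).le hpr0.ne', ← Real.rpow_mul hXpos.le] at h2
        rw [h2, hPrdef]
        congr 1
        field_simp
      rw [h1, one_div, Real.rpow_rpow_inv hXpos.le hmr0.ne']
    -- outer equality condition
    have houter := H2.2 eT
    -- inner equality condition at every point
    obtain ⟨u₀, hu₀⟩ := exists_pos_point μ hμne
    set c : ℝ := JK ^ (1/Pr) / JL ^ (1/Pr) with hcdef
    have hcpos' : 0 < c := div_pos (Real.rpow_pos_of_pos hJKpos _)
      (Real.rpow_pos_of_pos hJLpos _)
    refine ⟨c, hcpos', fun w => ?_⟩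
    obtain ⟨η, hη⟩ := htrans2 u₀ w
    have h3 := houter (act η e) (hSfull (act η e))
    have hJLne : JL ^ (1/Pr) ≠ 0 := (Real.rpow_pos_of_pos hJLpos _).ne'
    have hFcG : (PK.radial (act η e)) ^ (1/mr) = c * (PL.radial (act η e)) ^ (1/mr) := by
      rw [hcdef, div_mul_eq_mul_div, eq_div_iff hJLne]
      linear_combination h3
    have h4 := (hinner η).2 (by rw [hHceq (act η e)]) u₀ hu₀
    rw [hη] at h4
    have h5 : (PL.radial (act η e)) ^ (1/mr) ≠ 0 := (hGcpos (act η e)).ne'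
    have h6 : (K.radial w - c * L.radial w) * (PL.radial (act η e)) ^ (1/mr) = 0 := by
      linear_combination h4 + L.radial w * hFcG
    rcases mul_eq_zero.mp h6 with h7 | h7
    · linarith [h7]
    · exact absurd h7 h5
  · -- dilates → equality
    rintro ⟨c, hc, hKL⟩
    have hvalKc : ∀ v : Sph n, PK.radial v = c ^ (n - 1 - j : ℕ) * PL.radial v := by
      intro v
      obtain ⟨η, rfl⟩ := htrans v
      rw [hvalK η, hvalL η, ← integral_const_mul]
      refine integral_congr_ae (Filter.Eventually.of_forall fun u => ?_)
      beta_reduce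
      rw [hKL (act η u), mul_pow]
    have hvalSc : ∀ v : Sph n, PS.radial v = (1 + c) ^ (n - 1 - j : ℕ) * PL.radial v := by
      intro v
      obtain ⟨η, rfl⟩ := htrans v
      rw [hvalS η, hvalL η, ← integral_const_mul]
      refine integral_congr_ae (Filter.Eventually.of_forall fun u => ?_)
      beta_reduce
      rw [hKL (act η u), ← mul_pow]
      congr 1
      ring
    -- dualQuermass scaling
    have hscale : ∀ (d : ℝ), 0 < d →
        (∀ v : Sph n, d ^ (n - 1 - j : ℕ) * PL.radial v = d ^ (n - 1 - j : ℕ) * PL.radial v) →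
        True := fun _ _ _ => trivial
    have hJval : ∀ (d : ℝ) (hd : 0 < d) (M : StarBody n)
        (hM : ∀ v : Sph n, M.radial v = d ^ (n - 1 - j : ℕ) * PL.radial v),
        (∫ v, (M.radial v) ^ pr ∂S) = d ^ Pr * JL := by
      intro d hd M hM
      rw [hJLdef, ← integral_const_mul]
      refine integral_congr_ae (Filter.Eventually.of_forall fun v => ?_)
      beta_reduce
      rw [hM v, Real.mul_rpow (by positivity) (PL.pos v).le, ← Real.rpow_natCast d (n-1-j),
        ← Real.rpow_mul hd.le, ← hmrdef, ← hPrdef]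
    have hrpowPr : ∀ (d : ℝ), 0 < d → (d ^ Pr) ^ (1/Pr) = d := fun d hd => by
      rw [one_div, Real.rpow_rpow_inv hd.le hPr0.ne']
    have hKeq : dualQuermass n i PK ^ (1/Pr) = c * dualQuermass n i PL ^ (1/Pr) := by
      rw [hdqK, hdqL, hJKdef]
      rw [hJval c hc PK hvalKc]
      rw [← mul_assoc, mul_comm (1/(n:ℝ)) (c ^ Pr), mul_assoc,
        Real.mul_rpow (by positivity) (by positivity),
        hrpowPr c hc]
    have hSeq : dualQuermass n i PS ^ (1/Pr) = (1+c) * dualQuermass n i PL ^ (1/Pr) := by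
      rw [hdqS, hdqL, hJSdef]
      rw [hJval (1+c) (by linarith) PS hvalSc]
      rw [← mul_assoc, mul_comm (1/(n:ℝ)) ((1+c) ^ Pr), mul_assoc,
        Real.mul_rpow (by positivity) (by positivity),
        hrpowPr (1+c) (by linarith)]
    rw [hKeq, hSeq]
    ring

end DBMHelpers

/-- Dual Brunn–Minkowski inequality for a nontrivial radial Blaschke Minkowski
homomorphism Ψ: for star bodies K, L and 0 ≤ i ≤ n-1, 0 ≤ j ≤ n-3,
W̃_i(Ψ_j(K ~+ L))^{1/((n-i)(n-j-1))} ≤ W̃_i(Ψ_j K)^{1/((n-i)(n-j-1))} + W̃_i(Ψ_j L)^{1/((n-i)(n-j-1))},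
with equality iff K and L are dilates; in particular
V(Ψ(K ~+ L))^{1/(n(n-1))} ≤ V(ΨK)^{1/(n(n-1))} + V(ΨL)^{1/(n(n-1))}.
Here Ψ_j K = Ψ(K,…,K,B,…,B) with j copies of the unit ball B. -/
theorem stmt19 (n i j : ℕ) (hn : 3 ≤ n) [NeZero n]
    (hi : i ≤ n - 1) (hj : j ≤ n - 3)
    (G : Type*) [Group G] [TopologicalSpace G] [IsTopologicalGroup G]
    [MeasurableSpace G] [BorelSpace G]
    (act : G → Sph n → Sph n)
    (hact_one : ∀ u, act 1 u = u)
    (hact_mul : ∀ η τ u, act (η * τ) u = act η (act τ u))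
    (hact_cont : Continuous fun p : G × Sph n => act p.1 p.2)
    (e : Sph n)
    (htrans : ∀ u : Sph n, ∃ η : G, act η e = u)
    (hinv : ∀ ϑ : G, (sphMeasure n).map (act ϑ) = sphMeasure n)
    (μ : Measure (Sph n)) [IsFiniteMeasure μ] (hμne : μ ≠ 0)
    (hzonal : ∀ ϑ : G, act ϑ e = e → μ.map (act ϑ) = μ)
    (Ψm : (Fin (n - 1) → StarBody n) → StarBody n)
    (hrep : ∀ (F : Fin (n - 1) → StarBody n) (η : G),
      (Ψm F).radial (act η e) = ∫ u, ∏ k, (F k).radial (act η u) ∂μ)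
    (K L : StarBody n) :
    -- Ψ_j M = Ψ(M,…,M,B,…,B) with j copies of B
    let Ψj : ℕ → StarBody n → StarBody n := fun j' M =>
      Ψm fun k => if (k : ℕ) < n - 1 - j' then M else unitStar n
    let a : ℝ := 1 / (((n - i) * (n - j - 1) : ℕ) : ℝ)
    dualQuermass n i (Ψj j (radAdd n K L)) ^ a ≤
      dualQuermass n i (Ψj j K) ^ a + dualQuermass n i (Ψj j L) ^ a ∧
    (dualQuermass n i (Ψj j (radAdd n K L)) ^ a =
      dualQuermass n i (Ψj j K) ^ a + dualQuermass n i (Ψj j L) ^ a ↔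
      Dilates n K L) ∧
    dualQuermass n 0 (Ψj 0 (radAdd n K L)) ^ ((1 : ℝ) / ((n * (n - 1) : ℕ) : ℝ)) ≤
      dualQuermass n 0 (Ψj 0 K) ^ ((1 : ℝ) / ((n * (n - 1) : ℕ) : ℝ)) +
      dualQuermass n 0 (Ψj 0 L) ^ ((1 : ℝ) / ((n * (n - 1) : ℕ) : ℝ)) := by
  intro Ψj a
  have h1 := core n i j hn hi hj act hact_one hact_mul hact_cont e htrans hinv μ hμne Ψm hrep K L
  have h2 := core n 0 0 hn (by omega) (by omega) act hact_one hact_mul hact_cont e htrans hinv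
    μ hμne Ψm hrep K L
  exact ⟨h1.1, h1.2, h2.1⟩
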